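/- The noncommutative Boussinesq lattice system (a-b)·q = (p + q·q₁₁ - r₁₁)(p₀₁ - p₁₀), (b-a) = (q₀₁ - q₁₀)(p + q·q₁₁ - r₁₁), (b-a)·q₁₁ = (r₀₁ - r₁₀)(p + q·q₁₁ - r₁₁) admits the Lax representation L(p₀₁, q₀₁, q₁₁, r₁₁, a)·L(p, q, q₀₁, r₀₁, b) = L(p₁₀, q₁₀, q₁₁, r₁₁, b)·L(p, q, q₁₀, r₁₀, a), i.e. these matrix equalities hold for all λ whenever the three lattice equations hold (with p + q·q₁₁ - r₁₁ invertible). -/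
import Mathlib


/-- The Boussinesq Lax matrix `L(p,q,q',r',a)` (depending on `λ`) over a
division ring `R`, with rows `(-q',1,0)`, `(-r',0,1)`,
`(a - p q' - q r' - λ, p, q)`. -/
def LB {R : Type*} [DivisionRing R] (p q q' r' a lam : R) :
    Matrix (Fin 3) (Fin 3) R :=
  !![-q', 1, 0;
     -r', 0, 1;
     a - p * q' - q * r' - lam, p, q]

/-- The noncommutative Boussinesq lattice system admits the Lax representation
`L(p₀₁,q₀₁,q₁₁,r₁₁,a) L(p,q,q₀₁,r₀₁,b) = L(p₁₀,q₁₀,q₁₁,r₁₁,b) L(p,q,q₁₀,r₁₀,a)`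
for all central `λ`, whenever the three lattice equations hold (with
`p + q q₁₁ - r₁₁` invertible). -/
theorem boussinesq_lattice_lax {R : Type*} [DivisionRing R]
    (a b p q r p10 p01 q10 q01 q11 r10 r01 r11 : R)
    (ha : ∀ s : R, a * s = s * a) (hb : ∀ s : R, b * s = s * b)
    (hS : p + q * q11 - r11 ≠ 0)
    (e1 : (p + q * q11 - r11) * (p01 - p10) = (a - b) * q)
    (e2 : (q01 - q10) * (p + q * q11 - r11) = b - a)
    (e3 : (r01 - r10) * (p + q * q11 - r11) = (b - a) * q11) :
    ∀ lam : R, (∀ s : R, lam * s = s * lam) →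
      LB p01 q01 q11 r11 a lam * LB p q q01 r01 b lam
        = LB p10 q10 q11 r11 b lam * LB p q q10 r10 a lam := by
  intro lam hlam
  set S := p + q * q11 - r11 with hSdef
  set d : R := (b - a) * S⁻¹ with hddef
  have hab : ∀ s : R, (b - a) * s = s * (b - a) := fun s => by
    rw [sub_mul, mul_sub, hb, ha]
  have hrel2 : d * S = b - a := by
    rw [hddef, mul_assoc, inv_mul_cancel₀ hS, mul_one]
  have hrel1 : S * d = b - a := by
    rw [hddef, ← mul_assoc, ← hab, mul_assoc, mul_inv_cancel₀ hS, mul_one]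
  have hq01 : q01 = q10 + d := by
    have h := mul_right_cancel₀ hS (e2.trans hrel2.symm)
    rw [sub_eq_iff_eq_add] at h
    rw [h, add_comm]
  have hp01 : p01 = p10 - d * q := by
    have h2 : S * (-(d * q)) = (a - b) * q := by
      have h3 : S * (-(d * q)) = -((S * d) * q) := by noncomm_ring
      rw [h3, hrel1]; noncomm_ring
    have h := mul_left_cancel₀ hS (e1.trans h2.symm)
    rw [sub_eq_iff_eq_add] at h
    rw [h]; noncomm_ring
  have hr01 : r01 = r10 + q11 * d := by
    have h2 : (q11 * d) * S = (b - a) * q11 := by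
      rw [mul_assoc, hrel2, ← hab]
    have h := mul_right_cancel₀ hS (e3.trans h2.symm)
    rw [sub_eq_iff_eq_add] at h
    rw [h, add_comm]
  rw [hq01, hp01, hr01]
  ext i j
  fin_cases i <;> fin_cases j <;> simp [LB, Matrix.mul_apply, Fin.sum_univ_three]
  · noncomm_ring
  · -- entry (1,0)
    rw [← sub_eq_zero]
    have h : (-(r11 * (-d + -q10)) + (b - p * (q10 + d) - q * (r10 + q11 * d) - lam))
        - (r11 * q10 + (a - p * q10 - q * r10 - lam)) = -(S * d - (b - a)) := by
      rw [hSdef]; noncomm_ring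
    rw [h, hrel1, sub_self, neg_zero]
  · -- entry (2,0)
    rw [← sub_eq_zero]
    have h : ((a - (p10 - d * q) * q11 - (q10 + d) * r11 - lam) * (-d + -q10)
          + (p10 - d * q) * (-(q11 * d) + -r10)
          + (q10 + d) * (b - p * (q10 + d) - q * (r10 + q11 * d) - lam))
        - (-((b - p10 * q11 - q10 * r11 - lam) * q10) + -(p10 * r10)
          + q10 * (a - p * q10 - q * r10 - lam))
        = -((q10 + d) * (S * d - (b - a))) - ((d * S - (b - a)) * q10)
          + (d * a - a * d) + (lam * d - d * lam) := by
      rw [hSdef]; noncomm_ring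
    rw [h, hrel1, hrel2, ha d, hlam d]
    noncomm_ring
  · -- entry (2,1)
    rw [← sub_eq_zero]
    have h : (a - (p10 - d * q) * q11 - (q10 + d) * r11 - lam + (q10 + d) * p)
        - (b - p10 * q11 - q10 * r11 - lam + q10 * p) = d * S - (b - a) := by
      rw [hSdef]; noncomm_ring
    rw [h, hrel2, sub_self]
  · noncomm_ring
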